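/- F is strictly increasing on (0, ∞), satisfies 0 < F(x) < 1/e for all x > 0, and F(x) tends to 1/e as x → ∞; consequently F maps (0, ∞) bijectively onto (0, 1/e). -/

import Mathlib

open Real Set Filter MeasureTheory

/-- Standard normal density. -/
noncomputable def stdNormalPDF (x : ℝ) : ℝ :=
  Real.exp (-x ^ 2 / 2) / Real.sqrt (2 * Real.pi)

/-- `F x = ∫_0^x φ(1/v + v/2) dv`. -/
noncomputable def F (x : ℝ) : ℝ :=
  ∫ v in (0 : ℝ)..x, stdNormalPDF (1 / v + v / 2)

noncomputable def Gg (v : ℝ) : ℝ := stdNormalPDF (1 / v + v / 2)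

lemma F_eq (x : ℝ) : F x = ∫ v in (0:ℝ)..x, Gg v := rfl

lemma stdNormalPDF_pos (x : ℝ) : 0 < stdNormalPDF x := by
  unfold stdNormalPDF
  have h2 : (0:ℝ) < Real.sqrt (2 * Real.pi) := Real.sqrt_pos.2 (by positivity)
  positivity

lemma Gg_pos (v : ℝ) : 0 < Gg v := stdNormalPDF_pos _

lemma stdNormalPDF_continuous : Continuous stdNormalPDF := by
  unfold stdNormalPDF
  exact (Real.continuous_exp.comp (by continuity)).div_const _

lemma stdNormalPDF_le (x : ℝ) : stdNormalPDF x ≤ (Real.sqrt (2 * Real.pi))⁻¹ := by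
  unfold stdNormalPDF
  rw [div_eq_mul_inv]
  have h2 : (0:ℝ) < Real.sqrt (2 * Real.pi) := Real.sqrt_pos.2 (by positivity)
  have : Real.exp (-x ^ 2 / 2) ≤ 1 := Real.exp_le_one_iff.2 (by nlinarith [sq_nonneg x])
  nlinarith [inv_pos.2 h2]

lemma Gg_meas : Measurable Gg := by
  apply stdNormalPDF_continuous.measurable.comp
  exact ((measurable_const.div measurable_id).add (measurable_id.div_const 2))

lemma Gg_intervalIntegrable (a b : ℝ) : IntervalIntegrable Gg volume a b := by
  rw [intervalIntegrable_iff]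
  have hconst : IntegrableOn (fun _ : ℝ => (Real.sqrt (2 * Real.pi))⁻¹) (Set.uIoc a b) volume :=
    integrableOn_const measure_Ioc_lt_top.ne
  refine hconst.mono' (Gg_meas.aestronglyMeasurable.restrict) ?_
  filter_upwards with v
  rw [Real.norm_eq_abs, abs_of_pos (Gg_pos v)]
  exact stdNormalPDF_le _

lemma integral_stdNormalPDF : ∫ x : ℝ, stdNormalPDF x = 1 := by
  unfold stdNormalPDF
  rw [integral_div, show (fun x : ℝ => Real.exp (-x ^ 2 / 2))
      = fun x => Real.exp (-(1/2) * x ^ 2) from funext fun x => by norm_num [neg_div]; ring_nf]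
  rw [integral_gaussian, show Real.pi / (1/2) = 2 * Real.pi by ring, div_self]
  exact ne_of_gt (Real.sqrt_pos.2 (by positivity))

lemma integrable_stdNormalPDF : Integrable stdNormalPDF := by
  unfold stdNormalPDF
  simp_rw [div_eq_mul_inv]
  have := (integrable_exp_neg_mul_sq (show (0:ℝ) < 1/2 by norm_num)).mul_const
    (Real.sqrt (2 * Real.pi))⁻¹
  convert this using 3 with x
  ring

lemma u_deriv {v : ℝ} (hv : 0 < v) :
    HasDerivAt (fun v : ℝ => v/2 - 1/v) (1/2 + 1/v^2) v := by
  have h1 : HasDerivAt (fun v : ℝ => v/2) (1/2) v := (hasDerivAt_id v).div_const 2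
  have h2 : HasDerivAt (fun v : ℝ => 1/v) (-(v^2)⁻¹) v := by
    simpa [one_div] using hasDerivAt_inv (ne_of_gt hv)
  simpa [one_div, sub_neg_eq_add] using h1.fun_sub h2

lemma u_injOn : InjOn (fun v : ℝ => v/2 - 1/v) (Set.Ioi 0) := by
  have : StrictMonoOn (fun v : ℝ => v/2 - 1/v) (Set.Ioi 0) := by
    intro a ha b hb hab
    simp only [mem_Ioi] at ha hb
    have h1 : (1:ℝ)/b < 1/a := one_div_lt_one_div_of_lt ha hab
    dsimp only; linarith
  exact this.injOn

lemma u_image : (fun v : ℝ => v/2 - 1/v) '' (Set.Ioi 0) = Set.univ := by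
  apply eq_univ_of_forall
  intro y
  have hs : Real.sqrt (y^2 + 2) ^ 2 = y^2 + 2 := Real.sq_sqrt (by positivity)
  have habs : |y| < Real.sqrt (y^2 + 2) := by
    rw [← Real.sqrt_sq_eq_abs]
    exact Real.sqrt_lt_sqrt (sq_nonneg y) (by linarith)
  have hv : 0 < y + Real.sqrt (y^2 + 2) := by
    have := neg_abs_le y; linarith
  refine ⟨y + Real.sqrt (y^2 + 2), hv, ?_⟩
  dsimp only
  rw [div_sub_div _ _ (by norm_num) (ne_of_gt hv), div_eq_iff (by positivity)]
  nlinarith [hs]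

lemma Gg_eq (v : ℝ) (hv : 0 < v) :
    stdNormalPDF (v/2 - 1/v) = Real.exp 1 * Gg v := by
  unfold Gg stdNormalPDF
  rw [mul_div_assoc', mul_comm]
  congr 1
  rw [← Real.exp_add]
  congr 1
  have h : (1/v + v/2)^2 = (v/2 - 1/v)^2 + 2 := by
    field_simp; ring
  rw [h]; ring

lemma keyA : IntegrableOn (fun v => (1/2 + 1/v^2) * Gg v) (Set.Ioi 0) volume ∧
    ∫ v in Set.Ioi (0:ℝ), (1/2 + 1/v^2) * Gg v = 1 / Real.exp 1 := by
  have hd : ∀ v ∈ Set.Ioi (0:ℝ),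
      HasDerivWithinAt (fun v : ℝ => v/2 - 1/v) (1/2 + 1/v^2) (Set.Ioi 0) v :=
    fun v hv => (u_deriv hv).hasDerivWithinAt
  have habs : ∀ v ∈ Set.Ioi (0:ℝ),
      |1/2 + 1/v^2| • stdNormalPDF ((fun v : ℝ => v/2 - 1/v) v)
        = Real.exp 1 * ((1/2 + 1/v^2) * Gg v) := by
    intro v hv
    have hv' : (0:ℝ) < v := hv
    rw [smul_eq_mul, abs_of_pos (by positivity), Gg_eq v hv']; ring
  have hint : IntegrableOn
      (fun v => |1/2 + 1/v^2| • stdNormalPDF ((fun v : ℝ => v/2 - 1/v) v))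
      (Set.Ioi 0) volume := by
    rw [← integrableOn_image_iff_integrableOn_abs_deriv_smul measurableSet_Ioi hd u_injOn]
    rw [u_image]
    exact integrable_stdNormalPDF.integrableOn
  have heq : ∫ x in (fun v : ℝ => v/2 - 1/v) '' (Set.Ioi 0), stdNormalPDF x
      = ∫ v in Set.Ioi (0:ℝ), |1/2 + 1/v^2| • stdNormalPDF ((fun v : ℝ => v/2 - 1/v) v) :=
    integral_image_eq_integral_abs_deriv_smul measurableSet_Ioi hd u_injOn _
  rw [u_image, MeasureTheory.setIntegral_univ, integral_stdNormalPDF,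
    MeasureTheory.setIntegral_congr_fun measurableSet_Ioi habs, integral_const_mul] at heq
  have hint' : IntegrableOn (fun v => (1/2 + 1/v^2) * Gg v) (Set.Ioi 0) volume := by
    have h2 := (hint.congr_fun habs measurableSet_Ioi).const_mul (Real.exp 1)⁻¹
    refine MeasureTheory.IntegrableOn.congr_fun h2 (fun v hv => ?_) measurableSet_Ioi
    rw [← mul_assoc, inv_mul_cancel₀ (Real.exp_ne_zero 1), one_mul]
  refine ⟨hint', ?_⟩
  have he := Real.exp_pos 1
  rw [eq_div_iff (Real.exp_ne_zero 1)]
  linarith [heq]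

lemma Gg_integrableOn : IntegrableOn Gg (Set.Ioi 0) volume := by
  refine (keyA.1.const_mul 2).mono' Gg_meas.aestronglyMeasurable.restrict ?_
  rw [ae_restrict_iff' measurableSet_Ioi]
  filter_upwards with v hv
  have hv' : (0:ℝ) < v := hv
  rw [Real.norm_eq_abs, abs_of_pos (Gg_pos v)]
  have h1 : (0:ℝ) ≤ 1/v^2 := by positivity
  nlinarith [Gg_pos v]

lemma w_deriv {v : ℝ} (hv : 0 < v) : HasDerivAt (fun v : ℝ => 2/v) (-(2/v^2)) v := by
  have h2 : HasDerivAt (fun v : ℝ => v⁻¹) (-(v^2)⁻¹) v := hasDerivAt_inv (ne_of_gt hv)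
  have := h2.const_mul (2:ℝ)
  simpa [div_eq_mul_inv, mul_comm] using this

lemma w_injOn : InjOn (fun v : ℝ => 2/v) (Set.Ioi 0) := by
  intro a ha b hb hab
  have ha' : (0:ℝ) < a := ha
  have hb' : (0:ℝ) < b := hb
  field_simp at hab
  linarith

lemma w_image : (fun v : ℝ => 2/v) '' (Set.Ioi 0) = Set.Ioi 0 := by
  ext y
  constructor
  · rintro ⟨v, hv, rfl⟩
    have : (0:ℝ) < v := hv
    exact mem_Ioi.2 (by positivity)
  · intro hy
    have hy' : (0:ℝ) < y := hy
    exact ⟨2/y, mem_Ioi.2 (by positivity), by field_simp⟩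

lemma Gg_comp (v : ℝ) (hv : 0 < v) : Gg (2/v) = Gg v := by
  unfold Gg
  congr 1
  rw [one_div_div]
  field_simp
  ring

lemma keyB : ∫ v in Set.Ioi (0:ℝ), Gg v = ∫ v in Set.Ioi (0:ℝ), (2/v^2) * Gg v := by
  have hd : ∀ v ∈ Set.Ioi (0:ℝ),
      HasDerivWithinAt (fun v : ℝ => 2/v) (-(2/v^2)) (Set.Ioi 0) v :=
    fun v hv => (w_deriv hv).hasDerivWithinAt
  have heq := integral_image_eq_integral_abs_deriv_smul measurableSet_Ioi hd w_injOn Gg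
  rw [w_image] at heq
  rw [heq]
  refine MeasureTheory.setIntegral_congr_fun measurableSet_Ioi (fun v hv => ?_)
  have hv' : (0:ℝ) < v := hv
  rw [smul_eq_mul, abs_neg, abs_of_pos (by positivity), Gg_comp v hv']

lemma Gg_integral : ∫ v in Set.Ioi (0:ℝ), Gg v = 1 / Real.exp 1 := by
  have hJint : IntegrableOn (fun v => (1/v^2) * Gg v) (Set.Ioi 0) volume := by
    have h := keyA.1.sub (Gg_integrableOn.const_mul (1/2))
    have he : ((fun v => (1/2 + 1/v^2) * Gg v) - fun v => 1/2 * Gg v)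
        = fun v => (1/v^2) * Gg v := by
      funext v; simp only [Pi.sub_apply]; ring
    rwa [he] at h
  have hsplit : ∫ v in Set.Ioi (0:ℝ), (1/2 + 1/v^2) * Gg v
      = (1/2) * (∫ v in Set.Ioi (0:ℝ), Gg v) + ∫ v in Set.Ioi (0:ℝ), (1/v^2) * Gg v := by
    rw [← integral_const_mul, ← integral_add (Gg_integrableOn.const_mul (1/2)) hJint]
    refine MeasureTheory.setIntegral_congr_fun measurableSet_Ioi (fun v hv => ?_)
    ring
  have h2J : ∫ v in Set.Ioi (0:ℝ), (2/v^2) * Gg v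
      = 2 * ∫ v in Set.Ioi (0:ℝ), (1/v^2) * Gg v := by
    rw [← integral_const_mul]
    refine MeasureTheory.setIntegral_congr_fun measurableSet_Ioi (fun v hv => ?_)
    ring
  have hB := keyB
  rw [h2J] at hB
  have hA := keyA.2
  rw [hsplit] at hA
  linarith

/-- `F` is strictly increasing, takes values in `(0, 1/e)`, tends to `1/e` at
infinity, and maps `(0, ∞)` bijectively onto `(0, 1/e)`. -/
theorem F_props :
    StrictMonoOn F (Set.Ioi 0) ∧
    (∀ x : ℝ, 0 < x → 0 < F x ∧ F x < 1 / Real.exp 1) ∧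
    Filter.Tendsto F Filter.atTop (nhds (1 / Real.exp 1)) ∧
    Set.BijOn F (Set.Ioi 0) (Set.Ioo 0 (1 / Real.exp 1)) := by
  have hmono : StrictMonoOn F (Set.Ioi 0) := by
    intro x hx y hy hxy
    have hadd := intervalIntegral.integral_add_adjacent_intervals
      (Gg_intervalIntegrable 0 x) (Gg_intervalIntegrable x y)
    have hpos : 0 < ∫ v in x..y, Gg v :=
      intervalIntegral.intervalIntegral_pos_of_pos (Gg_intervalIntegrable x y) Gg_pos hxy
    rw [F_eq, F_eq, ← hadd]
    linarith
  have htend : Filter.Tendsto F Filter.atTop (nhds (1 / Real.exp 1)) := by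
    have h := MeasureTheory.intervalIntegral_tendsto_integral_Ioi 0 Gg_integrableOn
      (tendsto_id (α := ℝ))
    rw [Gg_integral] at h
    exact h.congr (fun x => (F_eq x).symm)
  have hFpos : ∀ x : ℝ, 0 < x → 0 < F x := by
    intro x hx
    rw [F_eq]
    exact intervalIntegral.intervalIntegral_pos_of_pos (Gg_intervalIntegrable 0 x) Gg_pos hx
  have hmonole : ∀ x y : ℝ, x ≤ y → F x ≤ F y := by
    intro x y hxy
    have hadd := intervalIntegral.integral_add_adjacent_intervals
      (Gg_intervalIntegrable 0 x) (Gg_intervalIntegrable x y)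
    have hnn : 0 ≤ ∫ v in x..y, Gg v :=
      intervalIntegral.integral_nonneg hxy (fun u _ => (Gg_pos u).le)
    rw [F_eq, F_eq, ← hadd]
    linarith
  have hle : ∀ x : ℝ, F x ≤ 1 / Real.exp 1 := by
    intro x
    refine ge_of_tendsto htend ?_
    filter_upwards [eventually_ge_atTop x] with t ht
    exact hmonole x t ht
  have hbounds : ∀ x : ℝ, 0 < x → 0 < F x ∧ F x < 1 / Real.exp 1 := by
    intro x hx
    refine ⟨hFpos x hx, ?_⟩
    have h1 : F x < F (x + 1) := hmono hx (by simp; linarith) (by linarith)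
    exact lt_of_lt_of_le h1 (hle (x + 1))
  refine ⟨hmono, hbounds, htend, ?_⟩
  have hF0 : F 0 = 0 := intervalIntegral.integral_same
  refine ⟨fun x hx => ⟨(hbounds x hx).1, (hbounds x hx).2⟩, hmono.injOn, ?_⟩
  intro y hy
  obtain ⟨hy1, hy2⟩ := hy
  obtain ⟨b, hb1, hb2⟩ := ((htend.eventually (eventually_gt_nhds hy2)).and
    (eventually_ge_atTop (0:ℝ))).exists
  have hcont : ContinuousOn F (Set.uIcc 0 b) :=
    (intervalIntegral.continuousOn_primitive_interval' (Gg_intervalIntegrable 0 b)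
      left_mem_uIcc).congr (fun t _ => (F_eq t))
  rw [uIcc_of_le hb2] at hcont
  have hIVT := intermediate_value_Icc hb2 hcont
  have hymem : y ∈ Set.Icc (F 0) (F b) := by
    rw [hF0]; exact ⟨hy1.le, hb1.le⟩
  obtain ⟨x, hx, hFx⟩ := hIVT hymem
  have hx0 : 0 < x := by
    rcases lt_or_eq_of_le hx.1 with h | h
    · exact h
    · exfalso; rw [← h, hF0] at hFx; exact hy1.ne hFx
  exact ⟨x, hx0, hFx⟩
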